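/- Let Σ := {(z₁, z₂, z₃) ∈ ℂ³ : x₃ x₁² = x₂²}, where xⱼ := Re zⱼ, be the tube over the Whitney umbrella. Let U ⊆ ℂ³ be a connected open set such that U ∩ Σ ∩ {x₁ ≠ 0} is nonempty, and let a₁, a₂, a₃ : U → ℂ be holomorphic functions satisfying a₁(z)·x₁x₃ − a₂(z)·x₂ + a₃(z)·x₁²/2 = 0 for every z ∈ U ∩ Σ with x₁ ≠ 0. Then a₁ = a₂ = a₃ = 0 identically on U. (In other words, the regular part Σ ∩ {x₁ ≠ 0} carries no nonzero tangent holomorphic vector field Σⱼ aⱼ(z) ∂/∂zⱼ, i.e. it is holomorphically nondegenerate.) -/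

import Mathlib

open Metric Filter

/-- If a holomorphic function on a disc vanishes on the vertical line `Re w = x`
(which meets the disc), it vanishes on the whole disc. -/
lemma line_vanish {g : ℂ → ℂ} {c : ℂ} {r : ℝ}
    (hg : DifferentiableOn ℂ g (ball c r))
    {x : ℝ} (hx : |x - c.re| < r)
    (hvan : ∀ w ∈ ball c r, w.re = x → g w = 0) :
    ∀ w ∈ ball c r, g w = 0 := by
  have hr : 0 < r := lt_of_le_of_lt (abs_nonneg _) hx
  set w₀ : ℂ := ⟨x, c.im⟩ with hw₀def
  have hdw₀ : dist w₀ c = |x - c.re| := by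
    rw [Complex.dist_of_im_eq (show w₀.im = c.im from rfl)]
    rw [Real.dist_eq]
  have hw₀ : w₀ ∈ ball c r := by rw [mem_ball, hdw₀]; exact hx
  have hre' : ∀ t : ℝ, (w₀ + (t : ℂ) * Complex.I).re = x := by
    intro t
    simp [Complex.add_re, Complex.re_ofReal_mul, hw₀def]
  have him' : ∀ t : ℝ, (w₀ + (t : ℂ) * Complex.I).im = c.im + t := by
    intro t
    simp [Complex.add_im, Complex.im_ofReal_mul, hw₀def]
  have hd' : ∀ t : ℝ, dist (w₀ + (t : ℂ) * Complex.I) w₀ = |t| := by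
    intro t
    rw [dist_eq_norm, add_sub_cancel_left, norm_mul, Complex.norm_real,
      Complex.norm_I, mul_one, Real.norm_eq_abs]
  set δ : ℝ := (r - |x - c.re|) / 2 with hδdef
  have hδ : 0 < δ := by rw [hδdef]; linarith
  set u : ℕ → ℂ := fun n => w₀ + (δ / (n + 1) : ℝ) * Complex.I with hu
  have hpos : ∀ n : ℕ, 0 < δ / (n + 1 : ℝ) := by
    intro n; positivity
  have hure : ∀ n, (u n).re = x := fun n => hre' _
  have humem : ∀ n, u n ∈ ball c r := by
    intro n
    have h1 : dist (u n) w₀ = δ / (n + 1) := by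
      rw [hu]; rw [hd']; exact abs_of_pos (hpos n)
    have h2 : δ / (n + 1 : ℝ) ≤ δ :=
      div_le_self hδ.le (le_add_of_nonneg_left (Nat.cast_nonneg n))
    calc dist (u n) c ≤ dist (u n) w₀ + dist w₀ c := dist_triangle _ _ _
      _ = δ / (n + 1) + |x - c.re| := by rw [h1, hdw₀]
      _ ≤ δ + |x - c.re| := by linarith
      _ < r := by rw [hδdef]; linarith
  have hune : ∀ n, u n ≠ w₀ := by
    intro n h
    have him := congrArg Complex.im h
    rw [hu] at him
    simp only [him'] at him
    have : δ / (n + 1 : ℝ) = 0 := by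
      have : c.im + δ / (n + 1 : ℝ) = c.im := him
      linarith
    exact absurd this (ne_of_gt (hpos n))
  have htendR : Tendsto (fun n : ℕ => δ / (n + 1 : ℝ)) atTop (nhds 0) := by
    have h1 := (tendsto_const_div_atTop_nhds_zero_nat δ).comp (tendsto_add_atTop_nat 1)
    simp only [Function.comp_def] at h1
    exact h1.congr (fun n => by push_cast; ring)
  have hcont : Continuous fun t : ℝ => w₀ + (t : ℂ) * Complex.I := by continuity
  have htend : Tendsto u atTop (nhds w₀) := by
    have h2 := (hcont.tendsto 0).comp htendR
    simp only [Function.comp_def, Complex.ofReal_zero, zero_mul, add_zero] at h2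
    exact h2
  have htendne : Tendsto u atTop (nhdsWithin w₀ {w₀}ᶜ) := by
    rw [tendsto_nhdsWithin_iff]
    exact ⟨htend, Filter.Eventually.of_forall fun n => hune n⟩
  have hfreq : ∃ᶠ w in nhdsWithin w₀ {w₀}ᶜ, g w = 0 :=
    htendne.frequently (Filter.Frequently.of_forall fun n => hvan _ (humem n) (hure n))
  have := (hg.analyticOnNhd isOpen_ball).eqOn_zero_of_preconnected_of_frequently_eq_zero
    (convex_ball c r).isPreconnected hw₀ hfreq
  exact fun w hw => this hw

/-- Membership in a ball of `ℂ × ℂ × ℂ` componentwise. -/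
lemma mem_ball_prod3 {p z : ℂ × ℂ × ℂ} {r : ℝ} :
    z ∈ ball p r ↔ dist z.1 p.1 < r ∧ dist z.2.1 p.2.1 < r ∧ dist z.2.2 p.2.2 < r := by
  simp [mem_ball, Prod.dist_eq, max_lt_iff, and_assoc]

/-- If a holomorphic function on a ball of `ℂ³` vanishes on a (maximally totally real)
slice `Re z = x` meeting the ball, it vanishes on the whole ball. -/
lemma slice_vanish {f : ℂ × ℂ × ℂ → ℂ} {p : ℂ × ℂ × ℂ} {r : ℝ}
    (hf : DifferentiableOn ℂ f (ball p r))
    {x₁ x₂ x₃ : ℝ}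
    (h₁ : |x₁ - p.1.re| < r) (h₂ : |x₂ - p.2.1.re| < r) (h₃ : |x₃ - p.2.2.re| < r)
    (hvan : ∀ z ∈ ball p r, z.1.re = x₁ → z.2.1.re = x₂ → z.2.2.re = x₃ → f z = 0) :
    ∀ z ∈ ball p r, f z = 0 := by
  -- Step 1: free the first coordinate
  have V1 : ∀ z ∈ ball p r, z.2.1.re = x₂ → z.2.2.re = x₃ → f z = 0 := by
    rintro ⟨z₁, z₂, z₃⟩ hz h2 h3
    obtain ⟨hd1, hd2, hd3⟩ := mem_ball_prod3.mp hz
    have hmaps : ∀ w ∈ ball p.1 r, (w, z₂, z₃) ∈ ball p r := by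
      intro w hw
      exact mem_ball_prod3.mpr ⟨hw, hd2, hd3⟩
    have hg : DifferentiableOn ℂ (fun w => f (w, z₂, z₃)) (ball p.1 r) := by
      have hin : DifferentiableOn ℂ (fun w : ℂ => ((w, z₂, z₃) : ℂ × ℂ × ℂ)) (ball p.1 r) :=
        (differentiable_id.prodMk (differentiable_const _)).differentiableOn
      exact hf.comp hin hmaps
    exact line_vanish hg h₁
      (fun w hw hre => hvan (w, z₂, z₃) (hmaps w hw) hre h2 h3) z₁ hd1
  -- Step 2: free the second coordinate
  have V2 : ∀ z ∈ ball p r, z.2.2.re = x₃ → f z = 0 := by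
    rintro ⟨z₁, z₂, z₃⟩ hz h3
    obtain ⟨hd1, hd2, hd3⟩ := mem_ball_prod3.mp hz
    have hmaps : ∀ w ∈ ball p.2.1 r, (z₁, w, z₃) ∈ ball p r := by
      intro w hw
      exact mem_ball_prod3.mpr ⟨hd1, hw, hd3⟩
    have hg : DifferentiableOn ℂ (fun w => f (z₁, w, z₃)) (ball p.2.1 r) := by
      have hin : DifferentiableOn ℂ (fun w : ℂ => ((z₁, w, z₃) : ℂ × ℂ × ℂ)) (ball p.2.1 r) :=
        ((differentiable_const _).prodMk (differentiable_id.prodMk (differentiable_const _))).differentiableOn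
      exact hf.comp hin hmaps
    exact line_vanish hg h₂
      (fun w hw hre => V1 (z₁, w, z₃) (hmaps w hw) hre h3) z₂ hd2
  -- Step 3: free the third coordinate
  rintro ⟨z₁, z₂, z₃⟩ hz
  obtain ⟨hd1, hd2, hd3⟩ := mem_ball_prod3.mp hz
  have hmaps : ∀ w ∈ ball p.2.2 r, (z₁, z₂, w) ∈ ball p r := by
    intro w hw
    exact mem_ball_prod3.mpr ⟨hd1, hd2, hw⟩
  have hg : DifferentiableOn ℂ (fun w => f (z₁, z₂, w)) (ball p.2.2 r) := by
    have hin : DifferentiableOn ℂ (fun w : ℂ => ((z₁, z₂, w) : ℂ × ℂ × ℂ)) (ball p.2.2 r) :=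
      ((differentiable_const _).prodMk ((differentiable_const _).prodMk differentiable_id)).differentiableOn
    exact hf.comp hin hmaps
  exact line_vanish hg h₃
    (fun w hw hre => V2 (z₁, z₂, w) (hmaps w hw) hre) z₃ hd3

/-- Identity principle for holomorphic (complex-differentiable) functions on a ball of a
complex normed space: vanishing near one point forces vanishing on the ball. -/
lemma ball_vanish {E : Type*} [NormedAddCommGroup E] [NormedSpace ℂ E]
    {f : E → ℂ} {c : E} {ρ : ℝ}
    (hf : DifferentiableOn ℂ f (ball c ρ)) {q : E} (hq : q ∈ ball c ρ)
    (hev : f =ᶠ[nhds q] 0) : ∀ w ∈ ball c ρ, f w = 0 := by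
  intro w hw
  set L : ℂ → E := fun t => t • (w - q) + q with hL
  have hL0 : L 0 = q := by simp [hL]
  have hL1 : L 1 = w := by simp [hL]
  set s : Set ℂ := L ⁻¹' ball c ρ with hs
  have hAker : ∀ p' : ℂ, (fun t : ℂ => t • (w - q) + q) p' =
      ((LinearMap.toSpanSingleton ℂ E (w - q)).restrictScalars ℝ) (p' -ᵥ 0) +ᵥ
        (fun t : ℂ => t • (w - q) + q) 0 := by
    intro p'
    simp [LinearMap.toSpanSingleton_apply]
  have hconv : Convex ℝ s := by
    have h := (convex_ball c ρ).affine_preimage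
      (AffineMap.mk' (fun t : ℂ => t • (w - q) + q)
        ((LinearMap.toSpanSingleton ℂ E (w - q)).restrictScalars ℝ) 0 hAker)
    exact h
  have hLcont : Continuous L := by
    rw [hL]; exact (continuous_id.smul continuous_const).add continuous_const
  have hsopen : IsOpen s := isOpen_ball.preimage hLcont
  have h0s : (0 : ℂ) ∈ s := by rw [hs]; simp only [Set.mem_preimage, hL0]; exact hq
  have h1s : (1 : ℂ) ∈ s := by rw [hs]; simp only [Set.mem_preimage, hL1]; exact hw
  have hLdiff : Differentiable ℂ L := by
    rw [hL]; exact (differentiable_id.smul (differentiable_const _)).add_const _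
  have hg : DifferentiableOn ℂ (f ∘ L) s :=
    hf.comp hLdiff.differentiableOn (fun t ht => ht)
  have hgev : (f ∘ L) =ᶠ[nhds 0] 0 := by
    have htd : Tendsto L (nhds 0) (nhds q) := by
      have := hLcont.continuousAt (x := (0 : ℂ))
      rwa [ContinuousAt, hL0] at this
    exact hev.comp_tendsto htd
  have := (hg.analyticOnNhd hsopen).eqOn_zero_of_preconnected_of_eventuallyEq_zero
    hconv.isPreconnected h0s hgev
  have h1 := this h1s
  simpa [Function.comp, hL1] using h1

/-- Propagation of vanishing along a connected open set for holomorphic functions. -/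
lemma propagate_vanish {E : Type*} [NormedAddCommGroup E] [NormedSpace ℂ E]
    {f : E → ℂ} {U : Set E} (hUopen : IsOpen U) (hUconn : IsPreconnected U)
    (hf : DifferentiableOn ℂ f U) {p : E} (hp : p ∈ U)
    (hev : f =ᶠ[nhds p] 0) : ∀ z ∈ U, f z = 0 := by
  set W : Set E := {z | ∀ᶠ y in nhds z, f y = 0} with hW
  have hWopen : IsOpen W := isOpen_setOf_eventually_nhds
  have hsub : U ⊆ W := by
    apply hUconn.subset_of_closure_inter_subset hWopen ⟨p, hp, hev⟩
    rintro z ⟨hzcl, hzU⟩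
    obtain ⟨ρ, hρpos, hρsub⟩ := Metric.isOpen_iff.mp hUopen z hzU
    obtain ⟨q, hqW, hqd⟩ := Metric.mem_closure_iff.mp hzcl ρ hρpos
    have hq : q ∈ ball z ρ := by rwa [mem_ball, dist_comm]
    have hvan := ball_vanish (hf.mono hρsub) hq hqW
    exact Filter.eventually_of_mem (isOpen_ball.mem_nhds (mem_ball_self hρpos))
      (fun y hy => hvan y hy)
  intro z hz
  exact (hsub hz).self_of_nhds

/-- Let `Σ = {z ∈ ℂ³ : (Re z₃)(Re z₁)² = (Re z₂)²}` be the tube over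
the Whitney umbrella.  If `U ⊆ ℂ³` is a connected open set meeting
`Σ ∩ {Re z₁ ≠ 0}` and `a₁, a₂, a₃` are holomorphic on `U` with
`a₁(z)·x₁x₃ − a₂(z)·x₂ + a₃(z)·x₁²/2 = 0` (where `xⱼ = Re zⱼ`) at every point of
`U ∩ Σ` with `x₁ ≠ 0`, then `a₁ = a₂ = a₃ = 0` on `U`: the regular part of the tube is
holomorphically nondegenerate. -/
theorem tube_over_whitney_umbrella_holomorphically_nondegenerate
    (U : Set (ℂ × ℂ × ℂ)) (hUopen : IsOpen U) (hUconn : IsConnected U)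
    (a₁ a₂ a₃ : ℂ × ℂ × ℂ → ℂ)
    (ha₁ : DifferentiableOn ℂ a₁ U) (ha₂ : DifferentiableOn ℂ a₂ U)
    (ha₃ : DifferentiableOn ℂ a₃ U)
    (hmeet : ∃ z ∈ U, z.2.2.re * z.1.re ^ 2 = z.2.1.re ^ 2 ∧ z.1.re ≠ 0)
    (htang : ∀ z ∈ U, z.2.2.re * z.1.re ^ 2 = z.2.1.re ^ 2 → z.1.re ≠ 0 →
      a₁ z * ((z.1.re : ℂ) * (z.2.2.re : ℂ)) - a₂ z * (z.2.1.re : ℂ)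
        + a₃ z * ((z.1.re : ℂ) ^ 2 / 2) = 0) :
    ∀ z ∈ U, a₁ z = 0 ∧ a₂ z = 0 ∧ a₃ z = 0 := by
  obtain ⟨p, hpU, hpS, hp1⟩ := hmeet
  obtain ⟨r, hr0, hball⟩ := Metric.isOpen_iff.mp hUopen p hpU
  set q1 : ℝ := p.1.re with hq1
  set q2 : ℝ := p.2.1.re with hq2
  set q3 : ℝ := p.2.2.re with hq3
  have hq1sq : 0 < q1 ^ 2 := lt_of_le_of_ne (sq_nonneg q1) (Ne.symm (pow_ne_zero 2 hp1))
  -- Step A: for every real point of the umbrella close to `Re p`, the frozen tangency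
  -- identity holds on the whole ball.
  have key : ∀ x₁ x₂ x₃ : ℝ, x₁ ≠ 0 → x₃ * x₁ ^ 2 = x₂ ^ 2 →
      |x₁ - q1| < r → |x₂ - q2| < r → |x₃ - q3| < r →
      ∀ z ∈ ball p r,
        a₁ z * ((x₁ : ℂ) * (x₃ : ℂ)) - a₂ z * (x₂ : ℂ) + a₃ z * ((x₁ : ℂ) ^ 2 / 2) = 0 := by
    intro x₁ x₂ x₃ hx1 hS h1 h2 h3
    have hdiff : DifferentiableOn ℂ
        (fun z => a₁ z * ((x₁ : ℂ) * (x₃ : ℂ)) - a₂ z * (x₂ : ℂ)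
          + a₃ z * ((x₁ : ℂ) ^ 2 / 2)) (ball p r) :=
      (((ha₁.mono hball).mul_const _).sub ((ha₂.mono hball).mul_const _)).add
        ((ha₃.mono hball).mul_const _)
    refine slice_vanish hdiff h1 h2 h3 ?_
    intro z hz e1 e2 e3
    have hzU : z ∈ U := hball hz
    have ht := htang z hzU (by rw [e1, e2, e3]; exact hS) (by rw [e1]; exact hx1)
    rw [e1, e2, e3] at ht
    exact ht
  -- Step B: perturbation along the umbrella gives vanishing on the ball.
  set ε : ℝ := min 1 (min r (r * q1 ^ 2 / (2 * |q2| + 2))) with hε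
  have hε0 : 0 < ε := by
    apply lt_min one_pos
    apply lt_min hr0
    have h2q : 0 < 2 * |q2| + 2 := by positivity
    positivity
  have hε1 : ε ≤ 1 := min_le_left _ _
  have hεr : ε ≤ r := le_trans (min_le_right _ _) (min_le_left _ _)
  have hεq : ε * (2 * |q2| + 2) ≤ r * q1 ^ 2 := by
    have h2q : 0 < 2 * |q2| + 2 := by positivity
    calc ε * (2 * |q2| + 2) ≤ (r * q1 ^ 2 / (2 * |q2| + 2)) * (2 * |q2| + 2) := by
          apply mul_le_mul_of_nonneg_right _ h2q.le
          exact le_trans (min_le_right _ _) (min_le_right _ _)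
      _ = r * q1 ^ 2 := by field_simp
  -- bounds for the perturbed umbrella point
  have hbounds : ∀ s : ℝ, |s| ≤ ε / 2 →
      |q1 - q1| < r ∧ |q2 + s - q2| < r ∧ |(q2 + s) ^ 2 / q1 ^ 2 - q3| < r := by
    intro s hs
    have habs_s : 0 ≤ |s| := abs_nonneg s
    refine ⟨by simpa using hr0, ?_, ?_⟩
    · have : |q2 + s - q2| = |s| := by ring_nf
      rw [this]
      linarith
    · have hq3val : q3 = q2 ^ 2 / q1 ^ 2 := by
        field_simp
        linarith [hpS]
      have hdiff : (q2 + s) ^ 2 / q1 ^ 2 - q3 = (2 * q2 * s + s ^ 2) / q1 ^ 2 := by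
        rw [hq3val]; ring
      rw [hdiff, abs_div, abs_of_pos hq1sq, div_lt_iff₀ hq1sq]
      have h1 : |2 * q2 * s + s ^ 2| ≤ 2 * |q2| * |s| + s ^ 2 := by
        calc |2 * q2 * s + s ^ 2| ≤ |2 * q2 * s| + |s ^ 2| := abs_add_le _ _
          _ = 2 * |q2| * |s| + s ^ 2 := by
              rw [abs_mul, abs_mul, abs_two, abs_pow, sq_abs]
      have h2 : |s| ^ 2 ≤ (ε / 2) ^ 2 := by nlinarith
      have h3 : |q2| * |s| ≤ |q2| * (ε / 2) := mul_le_mul_of_nonneg_left hs (abs_nonneg q2)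
      have hsq : s ^ 2 = |s| ^ 2 := (sq_abs s).symm
      nlinarith [abs_nonneg q2]
  -- on each point of the ball, extract aⱼ = 0
  have hloc : ∀ z ∈ ball p r, a₁ z = 0 ∧ a₂ z = 0 ∧ a₃ z = 0 := by
    intro z hz
    have ha0 : (q1 : ℂ) ≠ 0 := Complex.ofReal_ne_zero.mpr hp1
    have he0 : (ε : ℂ) ≠ 0 := Complex.ofReal_ne_zero.mpr (ne_of_gt hε0)
    have G : ∀ s : ℝ, |s| ≤ ε / 2 →
        a₁ z * ((q2 : ℂ) + (s : ℂ)) ^ 2 - a₂ z * (q1 : ℂ) * ((q2 : ℂ) + (s : ℂ))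
          + a₃ z * (q1 : ℂ) ^ 3 / 2 = 0 := by
      intro s hs
      obtain ⟨b1, b2, b3⟩ := hbounds s hs
      have hx3 : ((q2 + s) ^ 2 / q1 ^ 2) * q1 ^ 2 = (q2 + s) ^ 2 := by field_simp
      have E := key q1 (q2 + s) ((q2 + s) ^ 2 / q1 ^ 2) hp1 hx3 b1 b2 b3 z hz
      push_cast at E
      have hcancel : ((q2 : ℂ) + (s : ℂ)) ^ 2 / (q1 : ℂ) ^ 2 * (q1 : ℂ) ^ 2
          = ((q2 : ℂ) + (s : ℂ)) ^ 2 := by field_simp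
      linear_combination (q1 : ℂ) * E - a₁ z * hcancel
    have hG0 := G 0 (by simp; positivity)
    have hG1 := G (ε / 2) (by rw [abs_of_pos (by positivity)])
    have hG2 := G (-(ε / 2)) (by rw [abs_neg, abs_of_pos (by positivity)])
    push_cast at hG0 hG1 hG2
    have hA2 : a₁ z * (ε : ℂ) ^ 2 = 0 := by linear_combination 2 * hG1 + 2 * hG2 - 4 * hG0
    have hA : a₁ z = 0 :=
      (mul_eq_zero.mp hA2).resolve_right (pow_ne_zero 2 he0)
    have hB2 : a₂ z * (q1 : ℂ) * (ε : ℂ) = 0 := by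
      linear_combination hG2 - hG1 + 2 * (q2 : ℂ) * (ε : ℂ) * hA
    have hB : a₂ z = 0 := by
      rcases mul_eq_zero.mp hB2 with h | h
      · exact (mul_eq_zero.mp h).resolve_right ha0
      · exact absurd h he0
    have hC3 : a₃ z * (q1 : ℂ) ^ 3 = 0 := by
      linear_combination 2 * hG0 - 2 * (q2 : ℂ) ^ 2 * hA + 2 * (q2 : ℂ) * (q1 : ℂ) * hB
    have hC : a₃ z = 0 := (mul_eq_zero.mp hC3).resolve_right (pow_ne_zero 3 ha0)
    exact ⟨hA, hB, hC⟩
  -- Step C: propagate by the identity principle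
  have hnhds : ball p r ∈ nhds p := isOpen_ball.mem_nhds (mem_ball_self hr0)
  have hev1 : a₁ =ᶠ[nhds p] 0 :=
    Filter.eventually_of_mem hnhds (fun z hz => (hloc z hz).1)
  have hev2 : a₂ =ᶠ[nhds p] 0 :=
    Filter.eventually_of_mem hnhds (fun z hz => (hloc z hz).2.1)
  have hev3 : a₃ =ᶠ[nhds p] 0 :=
    Filter.eventually_of_mem hnhds (fun z hz => (hloc z hz).2.2)
  intro z hz
  exact ⟨propagate_vanish hUopen hUconn.isPreconnected ha₁ hpU hev1 z hz,
    propagate_vanish hUopen hUconn.isPreconnected ha₂ hpU hev2 z hz,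
    propagate_vanish hUopen hUconn.isPreconnected ha₃ hpU hev3 z hz⟩
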